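/- arXiv:1901.06905 — 3 statements merged into one kernel-verified Lean document; each statement's English description precedes it below -/
import Mathlib

section
/- Let A be an m×n real matrix with orthonormal rows (A Aᵀ = I_m) and let Λ = diag(λ₁,…,λ_n) be a diagonal matrix with positive diagonal entries. Then log det(A Λ Aᵀ) ≥ tr(A (log Λ) Aᵀ), where log Λ = diag(log λ₁,…,log λ_n). -/
open Matrix Real

theorem log_det_ge_trace_log {m n : ℕ} (A : Matrix (Fin m) (Fin n) ℝ)
    (Λ : Fin n → ℝ) (hA : A * Aᵀ = 1) (hΛ : ∀ j, 0 < Λ j) :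
    Real.log ((A * Matrix.diagonal Λ * Aᵀ).det) ≥
      Matrix.trace (A * Matrix.diagonal (fun j => Real.log (Λ j)) * Aᵀ) := by
  set B := A * Matrix.diagonal Λ * Aᵀ with hBdef
  have hB : B.IsHermitian := by
    have : B = A * Matrix.diagonal Λ * Aᴴ := by
      rw [hBdef, conjTranspose_eq_transpose_of_trivial]
    rw [this]
    exact isHermitian_mul_mul_conjTranspose A (isHermitian_diagonal _)
  set V : Matrix (Fin m) (Fin m) ℝ := (hB.eigenvectorUnitary : Matrix (Fin m) (Fin m) ℝ) with hV
  set μ := hB.eigenvalues with hμ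
  have hVV : star V * V = 1 := (Matrix.mem_unitaryGroup_iff').mp hB.eigenvectorUnitary.2
  have hVV' : V * star V = 1 := (Matrix.mem_unitaryGroup_iff).mp hB.eigenvectorUnitary.2
  have hdiag : star V * B * V = Matrix.diagonal μ := by
    have := hB.conjStarAlgAut_star_eigenvectorUnitary
    simpa using this
  set A' := star V * A with hA'
  have hA'T : A'ᵀ = Aᵀ * V := by
    rw [hA', Matrix.transpose_mul]
    congr 1
  have h1 : A' * Matrix.diagonal Λ * A'ᵀ = Matrix.diagonal μ := by
    rw [hA'T, hA', ← hdiag, hBdef]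
    simp [Matrix.mul_assoc]
  have h2 : A' * A'ᵀ = 1 := by
    rw [hA'T, hA', show star V * A * (Aᵀ * V) = star V * (A * Aᵀ) * V by simp [Matrix.mul_assoc], hA]
    simpa using hVV
  -- row sums of squares are 1
  have hrow : ∀ i, ∑ j, A' i j * A' i j = 1 := by
    intro i
    have := congrFun (congrFun h2 i) i
    simpa [Matrix.mul_apply, Matrix.transpose_apply, Matrix.one_apply] using this
  have hμeq : ∀ i, μ i = ∑ j, A' i j * A' i j * Λ j := by
    intro i
    have := congrFun (congrFun h1 i) i
    simp [Matrix.mul_apply, Matrix.diagonal_apply, Finset.sum_ite_eq, Matrix.transpose_apply] at this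
    rw [← this]
    apply Finset.sum_congr rfl
    intro j _
    ring
  have hμpos : ∀ i, 0 < μ i := by
    intro i
    rw [hμeq i]
    have h0 : ∀ j ∈ Finset.univ, (0:ℝ) ≤ A' i j * A' i j * Λ j := fun j _ =>
      mul_nonneg (mul_self_nonneg _) (hΛ j).le
    obtain ⟨j, hj⟩ : ∃ j, A' i j ≠ 0 := by
      by_contra h
      push_neg at h
      have := hrow i
      simp [h] at this
    exact Finset.sum_pos' h0 ⟨j, Finset.mem_univ j, mul_pos (mul_self_pos.mpr hj) (hΛ j)⟩
  -- Jensen per row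
  have hjensen : ∀ i, ∑ j, A' i j * A' i j * Real.log (Λ j) ≤ Real.log (μ i) := by
    intro i
    rw [hμeq i]
    have := (strictConcaveOn_log_Ioi.concaveOn).le_map_sum
      (t := Finset.univ) (w := fun j => A' i j * A' i j) (p := Λ)
      (fun j _ => mul_self_nonneg _) (hrow i) (fun j _ => hΛ j)
    simpa [smul_eq_mul, mul_assoc] using this
  -- determinant
  have hdet : B.det = ∏ i, μ i := by
    have := hB.det_eq_prod_eigenvalues
    simpa using this
  have hlogdet : Real.log B.det = ∑ i, Real.log (μ i) := by
    rw [hdet, Real.log_prod (fun i _ => (hμpos i).ne')]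
  -- trace
  have htr : Matrix.trace (A * Matrix.diagonal (fun j => Real.log (Λ j)) * Aᵀ)
      = ∑ i, ∑ j, A' i j * A' i j * Real.log (Λ j) := by
    have hconj : A' * Matrix.diagonal (fun j => Real.log (Λ j)) * A'ᵀ
        = star V * (A * Matrix.diagonal (fun j => Real.log (Λ j)) * Aᵀ) * V := by
      rw [hA'T, hA']; simp [Matrix.mul_assoc]
    have : Matrix.trace (A' * Matrix.diagonal (fun j => Real.log (Λ j)) * A'ᵀ)
        = Matrix.trace (A * Matrix.diagonal (fun j => Real.log (Λ j)) * Aᵀ) := by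
      rw [hconj, Matrix.trace_mul_cycle, ← Matrix.mul_assoc, hVV', Matrix.one_mul]
    rw [← this]
    rw [Matrix.trace]
    apply Finset.sum_congr rfl
    intro i _
    simp [Matrix.diag_apply, Matrix.mul_apply, Matrix.diagonal_apply, Finset.sum_ite_eq,
      Matrix.transpose_apply]
    apply Finset.sum_congr rfl
    intro j _
    ring
  rw [ge_iff_le, htr, hlogdet]
  exact Finset.sum_le_sum (fun i _ => hjensen i)
end

section
/- Let be the 2m×2n real representation of an m×n complex matrix A with orthonormal rows (A A† = I_m), and let Λ be a 2n×2n block-diagonal matrix with 2×2 symmetric positive definite blocks λ_j. Then log det(Â Λ Âᵀ) ≥ tr(Â (log Λ) Âᵀ) = ∑_{i,j} |A_{ij}|² log det λ_j. -/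
open Matrix Real Complex Finset

/-- The standard 2×2 real matrix representation of a complex number. -/
noncomputable def chat (a : ℂ) : Matrix (Fin 2) (Fin 2) ℝ :=
  !![a.re, -a.im; a.im, a.re]

/-- Blockwise real representation of a complex matrix. -/
noncomputable def mhat {m n : ℕ} (A : Matrix (Fin m) (Fin n) ℂ) :
    Matrix (Fin m × Fin 2) (Fin n × Fin 2) ℝ :=
  fun is jt => chat (A is.1 jt.1) is.2 jt.2

/-- The rotation matrix by angle θ. -/
noncomputable def rotMat (θ : ℝ) : Matrix (Fin 2) (Fin 2) ℝ :=
  !![Real.cos θ, -Real.sin θ; Real.sin θ, Real.cos θ]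

/-- Block-diagonal matrix with 2×2 blocks, indexed compatibly with `mhat`. -/
noncomputable def blkDiag {n : ℕ} (lam : Fin n → Matrix (Fin 2) (Fin 2) ℝ) :
    Matrix (Fin n × Fin 2) (Fin n × Fin 2) ℝ :=
  fun js kt => if js.1 = kt.1 then lam js.1 js.2 kt.2 else 0

/- ## Auxiliary lemmas -/

lemma chat_sum_mul (a b : ℂ) (s s' : Fin 2) :
    ∑ t : Fin 2, chat a s t * chat b s' t = chat (a * (starRingEnd ℂ) b) s s' := by
  fin_cases s <;> fin_cases s' <;>
    simp [chat, Fin.sum_univ_two, Complex.mul_re, Complex.mul_im] <;> ring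

lemma chat_finsum {ι : Type*} (s : Finset ι) (c : ι → ℂ) (u v : Fin 2) :
    ∑ j ∈ s, chat (c j) u v = chat (∑ j ∈ s, c j) u v := by
  fin_cases u <;> fin_cases v <;> simp [chat]

lemma rotMat_transpose (θ : ℝ) :
    (rotMat θ)ᵀ = !![Real.cos θ, Real.sin θ; -Real.sin θ, Real.cos θ] := by
  ext s t
  fin_cases s <;> fin_cases t <;> simp [rotMat, Matrix.transpose_apply]

lemma rotMat_mul_transpose (θ : ℝ) : rotMat θ * (rotMat θ)ᵀ = 1 := by
  rw [rotMat_transpose]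
  ext s t
  fin_cases s <;> fin_cases t <;>
    simp [rotMat, Matrix.mul_apply, Fin.sum_univ_two, Matrix.one_apply] <;>
    nlinarith [Real.sin_sq_add_cos_sq θ]

lemma det_rotMat (θ : ℝ) : (rotMat θ).det = 1 := by
  simp [rotMat, Matrix.det_fin_two_of]
  nlinarith [Real.sin_sq_add_cos_sq θ]

lemma blkDiag_mul {n : ℕ} (f g : Fin n → Matrix (Fin 2) (Fin 2) ℝ) :
    blkDiag f * blkDiag g = blkDiag (fun j => f j * g j) := by
  ext ⟨j, s⟩ ⟨k, t⟩
  rw [Matrix.mul_apply, Fintype.sum_prod_type]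
  simp only [blkDiag]
  rw [Finset.sum_eq_single j]
  · by_cases h : j = k <;> simp [h, Matrix.mul_apply]
  · intro l _ hl
    simp [Ne.symm hl]
  · simp

lemma blkDiag_transpose {n : ℕ} (f : Fin n → Matrix (Fin 2) (Fin 2) ℝ) :
    (blkDiag f)ᵀ = blkDiag (fun j => (f j)ᵀ) := by
  ext ⟨j, s⟩ ⟨k, t⟩
  simp only [Matrix.transpose_apply, blkDiag]
  by_cases h : j = k
  · subst h; simp
  · simp [h, Ne.symm h]

lemma blkDiag_diagonal {n : ℕ} (d : Fin n → Fin 2 → ℝ) :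
    blkDiag (fun j => Matrix.diagonal (d j))
      = Matrix.diagonal (fun jt : Fin n × Fin 2 => d jt.1 jt.2) := by
  ext ⟨j, s⟩ ⟨k, t⟩
  simp only [blkDiag, Matrix.diagonal_apply, Prod.mk.injEq]
  by_cases h : j = k
  · subst h
    by_cases hs : s = t <;> simp [hs]
  · simp [h]

lemma blkDiag_one {n : ℕ} : blkDiag (fun _ : Fin n => (1 : Matrix (Fin 2) (Fin 2) ℝ)) = 1 := by
  ext ⟨j, s⟩ ⟨k, t⟩
  simp only [blkDiag, Matrix.one_apply, Prod.mk.injEq]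
  by_cases h : j = k <;> by_cases hs : s = t <;> simp [h, hs]

lemma mhat_mul_transpose_eq_one {m n : ℕ} (A : Matrix (Fin m) (Fin n) ℂ) (hA : A * Aᴴ = 1) :
    mhat A * (mhat A)ᵀ = 1 := by
  ext ⟨i, s⟩ ⟨i', s'⟩
  have h : ∑ j, A i j * (starRingEnd ℂ) (A i' j) = if i = i' then 1 else 0 := by
    have h0 := congrFun (congrFun hA i) i'
    simpa [Matrix.mul_apply, Matrix.conjTranspose_apply, Matrix.one_apply, mul_comm] using h0
  rw [Matrix.mul_apply, Fintype.sum_prod_type]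
  simp only [mhat, Matrix.transpose_apply]
  have hterm : ∀ j : Fin n, ∑ t : Fin 2, chat (A i j) s t * chat (A i' j) s' t
      = chat (A i j * (starRingEnd ℂ) (A i' j)) s s' := fun j => chat_sum_mul _ _ _ _
  rw [Finset.sum_congr rfl fun j _ => hterm j, chat_finsum, h]
  by_cases hii : i = i'
  · subst hii
    simp only [if_pos rfl, Matrix.one_apply, Prod.mk.injEq, true_and]
    fin_cases s <;> fin_cases s' <;> simp [chat]
  · simp [hii, chat, Matrix.one_apply, Prod.mk.injEq]
    fin_cases s <;> fin_cases s' <;> simp [chat]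

lemma jensen_pre {K : Type*} [Fintype K] (w δ : K → ℝ) (hw : ∀ j, 0 ≤ w j)
    (hδ : ∀ j, 0 < δ j) (hsum : ∑ j, w j = 1) :
    0 < ∏ j, δ j ^ w j ∧ ∏ j, δ j ^ w j ≤ ∑ j, w j * δ j := by
  refine ⟨Finset.prod_pos fun j _ => Real.rpow_pos_of_pos (hδ j) _, ?_⟩
  exact Real.geom_mean_le_arith_mean_weighted Finset.univ w δ (fun j _ => hw j) hsum
    (fun j _ => (hδ j).le)

lemma jensen_log {K : Type*} [Fintype K] (w δ : K → ℝ) (hw : ∀ j, 0 ≤ w j)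
    (hδ : ∀ j, 0 < δ j) (hsum : ∑ j, w j = 1) :
    ∑ j, w j * Real.log (δ j) ≤ Real.log (∑ j, w j * δ j) := by
  obtain ⟨hpos, hle⟩ := jensen_pre w δ hw hδ hsum
  calc ∑ j, w j * Real.log (δ j) = Real.log (∏ j, δ j ^ w j) := by
        rw [Real.log_prod fun j _ => (Real.rpow_pos_of_pos (hδ j) _).ne']
        exact (Finset.sum_congr rfl fun j _ => (Real.log_rpow (hδ j) _)).symm
    _ ≤ _ := Real.log_le_log hpos hle

lemma jensen_sum_pos {K : Type*} [Fintype K] (w δ : K → ℝ) (hw : ∀ j, 0 ≤ w j)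
    (hδ : ∀ j, 0 < δ j) (hsum : ∑ j, w j = 1) : 0 < ∑ j, w j * δ j := by
  obtain ⟨hpos, hle⟩ := jensen_pre w δ hw hδ hsum
  exact lt_of_lt_of_le hpos hle

/-- The key inequality: for a real matrix `C` with orthonormal rows and positive `δ`,
`tr (C (log Δ) Cᵀ) ≤ log det (C Δ Cᵀ)`. -/
lemma core_ineq {N K : Type*} [Fintype N] [Fintype K] [DecidableEq N] [DecidableEq K]
    (C : Matrix N K ℝ) (hC : C * Cᵀ = 1) (δ : K → ℝ) (hδ : ∀ j, 0 < δ j) :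
    Matrix.trace (C * Matrix.diagonal (fun j => Real.log (δ j)) * Cᵀ) ≤
      Real.log (C * Matrix.diagonal δ * Cᵀ).det := by
  set M := C * Matrix.diagonal δ * Cᵀ with hMdef
  have hMherm : M.IsHermitian := by
    rw [Matrix.IsHermitian, Matrix.conjTranspose_eq_transpose_of_trivial]
    simp [hMdef, Matrix.transpose_mul, Matrix.mul_assoc]
  set U0 : Matrix N N ℝ := (hMherm.eigenvectorUnitary : Matrix N N ℝ) with hU0def
  have hstar : star U0 = U0ᵀ := by
    rw [Matrix.star_eq_conjTranspose, Matrix.conjTranspose_eq_transpose_of_trivial]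
  have hU1 : U0 * U0ᵀ = 1 := by
    rw [← hstar]; exact (Matrix.mem_unitaryGroup_iff).mp hMherm.eigenvectorUnitary.2
  have hU2 : U0ᵀ * U0 = 1 := by
    rw [← hstar]; exact (Matrix.mem_unitaryGroup_iff').mp hMherm.eigenvectorUnitary.2
  set V : Matrix N K ℝ := U0ᵀ * C with hVdef
  have hVt : Vᵀ = Cᵀ * U0 := by rw [hVdef, Matrix.transpose_mul, Matrix.transpose_transpose]
  have hVD : V * Matrix.diagonal δ * Vᵀ = Matrix.diagonal hMherm.eigenvalues := by
    have hspec := hMherm.conjStarAlgAut_star_eigenvectorUnitary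
    rw [Unitary.conjStarAlgAut_star_apply] at hspec
    rw [hstar] at hspec
    calc V * Matrix.diagonal δ * Vᵀ = U0ᵀ * M * U0 := by
          rw [hVdef, hVt, hMdef]; simp only [Matrix.mul_assoc]
      _ = Matrix.diagonal (RCLike.ofReal ∘ hMherm.eigenvalues) := hspec
      _ = Matrix.diagonal hMherm.eigenvalues := by
          congr 1
  have hVV : V * Vᵀ = 1 := by
    rw [hVdef, hVt]
    calc U0ᵀ * C * (Cᵀ * U0) = U0ᵀ * (C * Cᵀ) * U0 := by simp only [Matrix.mul_assoc]
      _ = 1 := by rw [hC, Matrix.mul_one, hU2]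
  have hrow : ∀ k, ∑ j, V k j ^ 2 = 1 := by
    intro k
    have := congrFun (congrFun hVV k) k
    simpa [Matrix.mul_apply, Matrix.one_apply, sq] using this
  have hmu : ∀ k, ∑ j, V k j ^ 2 * δ j = hMherm.eigenvalues k := by
    intro k
    have h := congrFun (congrFun hVD k) k
    rw [Matrix.mul_apply] at h
    simp only [Matrix.mul_diagonal, Matrix.transpose_apply, Matrix.diagonal_apply_eq] at h
    rw [← h]
    exact Finset.sum_congr rfl fun j _ => by ring
  have hμpos : ∀ k, 0 < hMherm.eigenvalues k := by
    intro k
    rw [← hmu k]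
    exact jensen_sum_pos _ _ (fun j => sq_nonneg _) hδ (hrow k)
  have htr : Matrix.trace (C * Matrix.diagonal (fun j => Real.log (δ j)) * Cᵀ)
      = ∑ k, ∑ j, V k j ^ 2 * Real.log (δ j) := by
    have h1 : C * Matrix.diagonal (fun j => Real.log (δ j)) * Cᵀ
        = U0 * (V * Matrix.diagonal (fun j => Real.log (δ j)) * Vᵀ) * U0ᵀ := by
      rw [hVdef, hVt]
      calc C * Matrix.diagonal (fun j => Real.log (δ j)) * Cᵀ
          = (U0 * U0ᵀ) * C * Matrix.diagonal (fun j => Real.log (δ j)) * Cᵀ * (U0 * U0ᵀ) := by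
            rw [hU1, Matrix.one_mul, Matrix.mul_one]
        _ = _ := by simp only [Matrix.mul_assoc]
    rw [h1, Matrix.trace_mul_comm, ← Matrix.mul_assoc, hU2, Matrix.one_mul]
    rw [Matrix.trace]
    refine Finset.sum_congr rfl fun k _ => ?_
    rw [Matrix.diag_apply, Matrix.mul_apply]
    simp only [Matrix.mul_diagonal, Matrix.transpose_apply]
    exact Finset.sum_congr rfl fun j _ => by ring
  have hdet : Real.log M.det = ∑ k, Real.log (hMherm.eigenvalues k) := by
    have h2 : M.det = ∏ k, hMherm.eigenvalues k := by
      have := hMherm.det_eq_prod_eigenvalues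
      simpa using this
    rw [h2, Real.log_prod fun k _ => (hμpos k).ne']
  rw [htr, hdet]
  refine Finset.sum_le_sum fun k _ => ?_
  rw [← hmu k]
  exact jensen_log _ _ (fun j => sq_nonneg _) hδ (hrow k)

lemma trace_quad (a : ℂ) (L : Matrix (Fin 2) (Fin 2) ℝ) :
    ∑ s : Fin 2, ∑ t : Fin 2, (∑ u : Fin 2, chat a s u * L u t) * chat a s t
      = ‖a‖ ^ 2 * (L 0 0 + L 1 1) := by
  rw [Complex.sq_norm, Complex.normSq_apply]
  simp [chat, Fin.sum_univ_two]
  ring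

lemma trace_mhat_blkDiag {m n : ℕ} (A : Matrix (Fin m) (Fin n) ℂ)
    (L : Fin n → Matrix (Fin 2) (Fin 2) ℝ) :
    Matrix.trace (mhat A * blkDiag L * (mhat A)ᵀ)
      = ∑ i : Fin m, ∑ j : Fin n, ‖A i j‖ ^ 2 * (L j 0 0 + L j 1 1) := by
  have hBL : ∀ (i : Fin m) (s : Fin 2) (j : Fin n) (t : Fin 2),
      (mhat A * blkDiag L) (i, s) (j, t) = ∑ u, chat (A i j) s u * L j u t := by
    intro i s j t
    rw [Matrix.mul_apply, Fintype.sum_prod_type]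
    rw [Finset.sum_eq_single j]
    · simp [mhat, blkDiag]
    · intro k _ hk; simp [blkDiag, hk]
    · simp
  rw [Matrix.trace, Fintype.sum_prod_type]
  calc ∑ i : Fin m, ∑ s : Fin 2, (mhat A * blkDiag L * (mhat A)ᵀ).diag (i, s)
      = ∑ i : Fin m, ∑ s : Fin 2, ∑ j : Fin n, ∑ t : Fin 2,
          (∑ u, chat (A i j) s u * L j u t) * chat (A i j) s t := by
        refine Finset.sum_congr rfl fun i _ => Finset.sum_congr rfl fun s _ => ?_
        rw [Matrix.diag_apply, Matrix.mul_apply, Fintype.sum_prod_type]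
        refine Finset.sum_congr rfl fun j _ => Finset.sum_congr rfl fun t _ => ?_
        rw [hBL, Matrix.transpose_apply]
        rfl
    _ = ∑ i : Fin m, ∑ j : Fin n, ∑ s : Fin 2, ∑ t : Fin 2,
          (∑ u, chat (A i j) s u * L j u t) * chat (A i j) s t :=
        Finset.sum_congr rfl fun i _ => Finset.sum_comm
    _ = _ := Finset.sum_congr rfl fun i _ => Finset.sum_congr rfl fun j _ => trace_quad _ _

lemma loglam_trace_eq (θj : ℝ) (dj : Fin 2 → ℝ) (hdj : ∀ s, 0 < dj s)
    (lamj loglamj : Matrix (Fin 2) (Fin 2) ℝ)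
    (hlamj : lamj = rotMat θj * Matrix.diagonal dj * (rotMat θj)ᵀ)
    (hloglamj : loglamj = rotMat θj * Matrix.diagonal (fun s => Real.log (dj s)) * (rotMat θj)ᵀ) :
    loglamj 0 0 + loglamj 1 1 = Real.log lamj.det := by
  have hdet : lamj.det = dj 0 * dj 1 := by
    rw [hlamj, Matrix.det_mul, Matrix.det_mul, Matrix.det_transpose, det_rotMat,
      Matrix.det_diagonal, Fin.prod_univ_two]
    ring
  rw [hdet, Real.log_mul (hdj 0).ne' (hdj 1).ne', hloglamj, rotMat_transpose]
  have h := Real.sin_sq_add_cos_sq θj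
  simp [rotMat, Matrix.mul_apply, Matrix.mul_diagonal, Matrix.vecMul_diagonal, Fin.sum_univ_two]
  linear_combination Real.log (dj 0) * h + Real.log (dj 1) * h

theorem complex_log_det_ge_trace {m n : ℕ} (A : Matrix (Fin m) (Fin n) ℂ)
    (hA : A * Aᴴ = 1)
    (θ : Fin n → ℝ) (d : Fin n → Fin 2 → ℝ) (hd : ∀ j s, 0 < d j s)
    (lam : Fin n → Matrix (Fin 2) (Fin 2) ℝ)
    (hlam : ∀ j, lam j = rotMat (θ j) * Matrix.diagonal (d j) * (rotMat (θ j))ᵀ)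
    (loglam : Fin n → Matrix (Fin 2) (Fin 2) ℝ)
    (hloglam : ∀ j, loglam j =
      rotMat (θ j) * Matrix.diagonal (fun s => Real.log (d j s)) * (rotMat (θ j))ᵀ) :
    Real.log ((mhat A * blkDiag lam * (mhat A)ᵀ).det) ≥
        Matrix.trace (mhat A * blkDiag loglam * (mhat A)ᵀ) ∧
      Matrix.trace (mhat A * blkDiag loglam * (mhat A)ᵀ) =
        ∑ i : Fin m, ∑ j : Fin n, ‖A i j‖ ^ 2 * Real.log ((lam j).det) := by
  have hBB := mhat_mul_transpose_eq_one A hA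
  set R : Matrix (Fin n × Fin 2) (Fin n × Fin 2) ℝ := blkDiag (fun j => rotMat (θ j)) with hRdef
  have hRt : Rᵀ = blkDiag (fun j => (rotMat (θ j))ᵀ) := blkDiag_transpose _
  have hRR : R * Rᵀ = 1 := by
    rw [hRt, hRdef, blkDiag_mul,
      show (fun j => rotMat (θ j) * (rotMat (θ j))ᵀ) = fun _ : Fin n => (1 : Matrix (Fin 2) (Fin 2) ℝ)
        from funext fun j => rotMat_mul_transpose _]
    exact blkDiag_one
  set C : Matrix (Fin m × Fin 2) (Fin n × Fin 2) ℝ := mhat A * R with hCdef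
  have hCt : Cᵀ = Rᵀ * (mhat A)ᵀ := by rw [hCdef, Matrix.transpose_mul]
  have hCC : C * Cᵀ = 1 := by
    rw [hCdef, hCt]
    calc mhat A * R * (Rᵀ * (mhat A)ᵀ) = mhat A * (R * Rᵀ) * (mhat A)ᵀ := by
          simp only [Matrix.mul_assoc]
      _ = 1 := by rw [hRR, Matrix.mul_one, hBB]
  set δ : Fin n × Fin 2 → ℝ := fun jt => d jt.1 jt.2 with hδdef
  have hδpos : ∀ jt, 0 < δ jt := fun jt => hd _ _
  have hlamEq : blkDiag lam = R * Matrix.diagonal δ * Rᵀ := by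
    rw [hδdef, ← blkDiag_diagonal d, hRt, hRdef, blkDiag_mul, blkDiag_mul]
    exact congrArg blkDiag (funext fun j => hlam j)
  have hloglamEq : blkDiag loglam
      = R * Matrix.diagonal (fun jt => Real.log (δ jt)) * Rᵀ := by
    have : (Matrix.diagonal (fun jt : Fin n × Fin 2 => Real.log (δ jt)))
        = blkDiag (fun j => Matrix.diagonal (fun s => Real.log (d j s))) :=
      (blkDiag_diagonal (fun j s => Real.log (d j s))).symm
    rw [this, hRt, hRdef, blkDiag_mul, blkDiag_mul]
    exact congrArg blkDiag (funext fun j => hloglam j)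
  have hkey : mhat A * blkDiag lam * (mhat A)ᵀ = C * Matrix.diagonal δ * Cᵀ := by
    rw [hlamEq, hCdef, hCt]
    simp only [Matrix.mul_assoc]
  have hkeylog : mhat A * blkDiag loglam * (mhat A)ᵀ
      = C * Matrix.diagonal (fun jt => Real.log (δ jt)) * Cᵀ := by
    rw [hloglamEq, hCdef, hCt]
    simp only [Matrix.mul_assoc]
  constructor
  · rw [hkey, hkeylog]
    exact core_ineq C hCC δ hδpos
  · rw [trace_mhat_blkDiag A loglam]
    refine Finset.sum_congr rfl fun i _ => Finset.sum_congr rfl fun j _ => ?_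
    rw [loglam_trace_eq (θ j) (d j) (hd j) (lam j) (loglam j) (hlam j) (hloglam j)]
end

section
/- Let A be an m×n real matrix of block form (I_r 0 ; 0 A_u) with A Aᵀ = I_m, all columns of A_u nonzero, every row of A_u having at least two nonzero entries, and let λ_j > 0 (j = 1,…,n). If equality ∑_i log(∑_j A_{ij}² λ_j) = ∑_i ∑_j A_{ij}² log λ_j holds, then for every j with r < j ≤ n there exists k ≠ j, r < k ≤ n, with λ_j = λ_k. -/
open Matrix Real Finset

theorem equality_forces_pairing {m n r : ℕ} (A : Matrix (Fin m) (Fin n) ℝ)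
    (hA : A * Aᵀ = 1)
    (hblock : ∀ i : Fin m, ∀ j : Fin n, ((i : ℕ) < r ∨ (j : ℕ) < r) →
      A i j = if (i : ℕ) = (j : ℕ) then 1 else 0)
    (hcols : ∀ j : Fin n, r ≤ (j : ℕ) → ∃ i, A i j ≠ 0)
    (hrows : ∀ i : Fin m, r ≤ (i : ℕ) →
      ∃ j k : Fin n, j ≠ k ∧ A i j ≠ 0 ∧ A i k ≠ 0)
    (Λ : Fin n → ℝ) (hΛ : ∀ j, 0 < Λ j)
    (heq : ∑ i, Real.log (∑ j, (A i j) ^ 2 * Λ j) =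
      ∑ i, ∑ j, (A i j) ^ 2 * Real.log (Λ j)) :
    ∀ j : Fin n, r ≤ (j : ℕ) →
      ∃ k : Fin n, k ≠ j ∧ r ≤ (k : ℕ) ∧ Λ j = Λ k := by
  -- each row's squares sum to 1
  have hw1 : ∀ i : Fin m, ∑ j, (A i j) ^ 2 = 1 := by
    intro i
    have := congrFun (congrFun hA i) i
    simp [Matrix.mul_apply, Matrix.one_apply, Matrix.transpose_apply] at this
    simpa [pow_two] using this
  have hw0 : ∀ (i : Fin m) (j : Fin n), (0:ℝ) ≤ (A i j) ^ 2 := fun i j => sq_nonneg _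
  -- termwise Jensen inequality
  have hle : ∀ i : Fin m,
      ∑ j, (A i j) ^ 2 * Real.log (Λ j) ≤ Real.log (∑ j, (A i j) ^ 2 * Λ j) := by
    intro i
    have := strictConcaveOn_log_Ioi.concaveOn.le_map_sum
      (t := Finset.univ) (w := fun j => (A i j) ^ 2) (p := Λ)
      (fun j _ => hw0 i j) (hw1 i) (fun j _ => hΛ j)
    simpa [smul_eq_mul] using this
  -- sum equality forces termwise equality
  have heach : ∀ i : Fin m,
      Real.log (∑ j, (A i j) ^ 2 * Λ j) = ∑ j, (A i j) ^ 2 * Real.log (Λ j) := by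
    have := (Finset.sum_eq_sum_iff_of_le (fun i _ => hle i)).mp heq.symm
    intro i
    exact (this i (Finset.mem_univ i)).symm
  -- equality case: within each row all Λ j with A i j ≠ 0 agree
  have hrow : ∀ (i : Fin m) (j k : Fin n), A i j ≠ 0 → A i k ≠ 0 → Λ j = Λ k := by
    intro i j k hj hk
    have hiff := strictConcaveOn_log_Ioi.map_sum_eq_iff'
      (t := Finset.univ) (w := fun j => (A i j) ^ 2) (p := Λ)
      (fun j _ => hw0 i j) (hw1 i) (fun j _ => hΛ j)
    have heq' : Real.log (∑ j, (A i j) ^ 2 • Λ j) = ∑ j, (A i j) ^ 2 • Real.log (Λ j) := by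
      simpa [smul_eq_mul] using heach i
    have hall := hiff.mp heq'
    have h1 := hall j (Finset.mem_univ j) (by simpa using pow_ne_zero 2 hj)
    have h2 := hall k (Finset.mem_univ k) (by simpa using pow_ne_zero 2 hk)
    rw [h1, h2]
  intro j hj
  obtain ⟨i, hij⟩ := hcols j hj
  have hir : r ≤ (i : ℕ) := by
    by_contra h
    push_neg at h
    have := hblock i j (Or.inl h)
    rw [if_neg (by omega)] at this
    exact hij this
  obtain ⟨j₁, j₂, hne, h1, h2⟩ := hrows i hir
  have hcol_r : ∀ k : Fin n, A i k ≠ 0 → r ≤ (k : ℕ) := by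
    intro k hk
    by_contra h
    push_neg at h
    have := hblock i k (Or.inr h)
    rw [if_neg (by omega)] at this
    exact hk this
  by_cases hc : j₁ = j
  · refine ⟨j₂, ?_, hcol_r j₂ h2, hrow i j j₂ hij h2⟩
    rintro rfl; exact hne hc
  · exact ⟨j₁, hc, hcol_r j₁ h1, hrow i j j₁ hij h1⟩
end
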